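/- With notation as above (k = p_1^{m_1}⋯p_n^{m_n}, γ(t_i) = multiplication by p_i^{m_i} on ℤ[1/k], ρ_- (t_i) = −m_i log p_i), the set Q_- = {x ∈ ℤ[1/k] : |x| ≤ 1} is strictly confining: there exists z ∈ ℤ^n with ρ_-(z) > 0 and γ(z)(Q_-) a proper subset of Q_-. -/

import Mathlib

/-- `ℤ[1/k]`: the set of rationals with denominator dividing a power of `k`. -/
def Zinv (k : ℕ) : Set ℚ := {x | ∃ a : ℤ, ∃ e : ℕ, x = (a : ℚ) / (k : ℚ) ^ e}

/-- The unit ball `Q_- = {x ∈ ℤ[1/k] : |x| ≤ 1}` is *strictly* confining: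
    there is `z` with `ρ_-(z) > 0` and `γ(z)(Q_-) ⊊ Q_-`. -/
theorem Qminus_strictly_confining (n : ℕ) (hn : 0 < n) (p m : Fin n → ℕ)
    (hp : ∀ i, Nat.Prime (p i)) (hinj : Function.Injective p) (hm : ∀ i, 1 ≤ m i)
    (μ : (Fin n → ℤ) → ℚ)
    (hμ : ∀ z, μ z = ∏ j, (p j : ℚ) ^ (z j * (m j : ℤ)))
    (ρ : (Fin n → ℤ) → ℝ)
    (hρ : ∀ z, ρ z = -∑ j, (z j : ℝ) * (m j : ℝ) * Real.log (p j))
    (Qm : Set ℚ) (hQm : Qm = {x | x ∈ Zinv (∏ j, p j ^ m j) ∧ |x| ≤ 1}) :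
    ∃ z : Fin n → ℤ, 0 < ρ z ∧ (fun x : ℚ => μ z * x) '' Qm ⊂ Qm := by
  set k : ℕ := ∏ j, p j ^ m j with hk
  have hkpos : 0 < k := Finset.prod_pos (fun j _ => pow_pos (hp j).pos _)
  have hk2 : 2 ≤ k := by
    have h0 : p ⟨0, hn⟩ ^ m ⟨0, hn⟩ ≤ k :=
      Finset.single_le_prod' (f := fun j => p j ^ m j)
        (fun j _ => Nat.one_le_iff_ne_zero.mpr (pow_ne_zero _ (hp j).pos.ne'))
        (Finset.mem_univ (⟨0, hn⟩ : Fin n))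
    calc 2 ≤ p ⟨0, hn⟩ ^ 1 := by simpa using (hp ⟨0, hn⟩).two_le
    _ ≤ p ⟨0, hn⟩ ^ m ⟨0, hn⟩ :=
        Nat.pow_le_pow_right (hp ⟨0, hn⟩).pos (hm _)
    _ ≤ k := h0
  have hkQ : (1 : ℚ) < (k : ℚ) := by exact_mod_cast hk2.trans_lt' one_lt_two
  have hkQ0 : (0 : ℚ) < (k : ℚ) := by positivity
  refine ⟨fun _ => -1, ?_, ?_⟩
  · rw [hρ]
    have : -∑ j, ((((fun _ => (-1:ℤ)) j : ℤ)) : ℝ) * (m j : ℝ) * Real.log (p j)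
        = ∑ j, (m j : ℝ) * Real.log (p j) := by
      rw [← Finset.sum_neg_distrib]
      congr 1; funext j; push_cast; ring
    rw [this]
    apply Finset.sum_pos
    · intro j _
      have h1 : (0:ℝ) < m j := by exact_mod_cast hm j
      have h2 : 0 < Real.log (p j) :=
        Real.log_pos (by exact_mod_cast (hp j).one_lt)
      exact mul_pos h1 h2
    · exact ⟨⟨0, hn⟩, Finset.mem_univ _⟩
  · have hμz : μ (fun _ => -1) = (k : ℚ)⁻¹ := by
      rw [hμ, hk]
      push_cast
      rw [← Finset.prod_inv_distrib]
      congr 1; funext j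
      rw [neg_one_mul, zpow_neg, zpow_natCast]
    constructor
    · rintro y ⟨x, hx, rfl⟩
      rw [hQm] at hx ⊢
      obtain ⟨⟨a, e, hae⟩, hx1⟩ := hx
      refine ⟨⟨a, e + 1, ?_⟩, ?_⟩
      · simp only [hμz, hae]
        field_simp
        ring
      · simp only [hμz]
        rw [abs_mul, abs_inv, abs_of_pos hkQ0]
        calc (k:ℚ)⁻¹ * |x| ≤ 1 * 1 := by
              apply mul_le_mul _ hx1 (abs_nonneg _) zero_le_one
              rw [inv_le_one_iff₀]; right; exact hkQ.le
        _ = 1 := one_mul 1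
    · intro hsub
      have h1 : (1:ℚ) ∈ Qm := by
        rw [hQm]
        exact ⟨⟨1, 0, by norm_num⟩, by norm_num⟩
      obtain ⟨x, hx, hx1⟩ := hsub h1
      rw [hQm] at hx
      have : x = (k:ℚ) := by
        rw [hμz] at hx1
        field_simp at hx1
        linarith [hx1]
      rw [this] at hx
      have := hx.2
      rw [abs_of_pos hkQ0] at this
      linarith
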